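/- Let X be a manifold with an action of a finite group G, I a finite set, σ a permutation of I, and g ∈ G^I. With 𝔤 = ψ^σ(g) the cycle product and ν^σ(g) as above, the fixed point locus of the element gσ ∈ G^I ⋊ Σ_I acting on X^I equals ρ(ν^σ(g)⁻¹) applied to the product over σ-orbits a of the diagonal copies Δ^a of the fixed-point sets X^{𝔤_a}. -/
import Mathlib


/-- The action of `Σ_I` on `G^I` used to form the wreath product `G^I ⋊ Σ_I`:
`(h^σ)_i = h_{σ i}`, and the semidirect-product convention of Mathlib
`(g, σ) * (h, τ) = (g * φ σ h, σ τ)` realizes `gσ · hτ = g h^{σ⁻¹} στ`. -/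
def wrAct (G I : Type*) [Group G] : Equiv.Perm I →* MulAut (I → G) where
  toFun σ :=
    { toFun := fun g i => g (σ⁻¹ i)
      invFun := fun g i => g (σ i)
      left_inv := fun g => funext fun i => by simp
      right_inv := fun g => funext fun i => by simp
      map_mul' := fun g h => rfl }
  map_one' := by
    ext g i
    simp
  map_mul' := fun σ τ => by
    ext g i
    simp [Equiv.Perm.mul_apply]

/-- The wreath product `G^I ⋊ Σ_I`. -/
abbrev WreathProduct (G I : Type*) [Group G] : Type _ :=
  (I → G) ⋊[wrAct G I] Equiv.Perm I

/-- The (ordered) partial cycle product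
`g_{σ^{n-1}(i)} · g_{σ^{n-2}(i)} ⋯ g_{σ(i)} · g_i` of `g : I → G` along the
`σ`-trajectory of `i`; for `n` the size of the `σ`-orbit of `i` this is the
cycle product `ψ^σ(g)_a` of the orbit `a` of `i` with representative `i`. -/
def cycProd {G I : Type*} [Group G] (σ : Equiv.Perm I) (g : I → G) (i : I) (n : ℕ) : G :=
  ((List.range n).map fun k => g ((σ ^ (n - 1 - k)) i)).prod

/-- The element `ν^σ(g) ∈ G^I`, relative to a choice `rep` of orbit
representatives and the "position" function `m` (so `i = σ^(m i) (rep i)`):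
`ν^σ(g)_{σ^m(i_a)} = g_{σ^m(i_a)} ⋯ g_{σ(i_a)} g_{i_a}`. -/
def nuFun {G I : Type*} [Group G] (σ : Equiv.Perm I) (g : I → G)
    (rep : I → I) (m : I → ℕ) : I → G :=
  fun i => cycProd σ g (rep i) (m i + 1)

/-- The element `ε_𝔤 ∈ G^I` whose component at each orbit representative is the
cycle product of that orbit and is `1` elsewhere. -/
noncomputable def epsFun {G I : Type*} [Group G] [DecidableEq I] (σ : Equiv.Perm I) (g : I → G)
    (rep : I → I) : I → G :=
  fun i => if rep i = i then cycProd σ g i (Function.minimalPeriod (⇑σ) i) else 1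

section Aux

variable {G I : Type*} [Group G]

lemma cycProd0 (σ : Equiv.Perm I) (g : I → G) (r : I) :
    cycProd σ g r 0 = 1 := by simp [cycProd]

lemma cycProd_succ (σ : Equiv.Perm I) (g : I → G) (r : I) (n : ℕ) :
    cycProd σ g r (n + 1) = g ((σ ^ n) r) * cycProd σ g r n := by
  unfold cycProd
  rw [List.range_succ_eq_map, List.map_cons, List.prod_cons, List.map_map]
  congr 2
  apply List.map_congr_left
  intro k _
  simp only [Function.comp_apply]
  have h : n + 1 - 1 - Nat.succ k = n - 1 - k := by omega
  rw [h]

lemma cycProd_one (σ : Equiv.Perm I) (g : I → G) (r : I) :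
    cycProd σ g r 1 = g r := by
  rw [cycProd_succ, cycProd0]; simp

end Aux


/-!
STATEMENT 9: Let `X` be a manifold with a (right) action `ρ` of a finite group
`G`, `σ ∈ Σ_I`, `g ∈ G^I`.  With `𝔤 = ψ^σ(g)` the cycle product and `ν = ν^σ(g)`,
the fixed point locus of `gσ` in `X^I` (where `(ρ(gσ)x)_i = ρ(g_{σ(i)}) x_{σ(i)}`)
equals `ρ(ν^σ(g)⁻¹)` applied to the product over `σ`-orbits `a` of the diagonal
copies `Δ^a` of the fixed-point sets `X^{𝔤_a}`, i.e. it is the set of `x` of the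
form `x_i = ρ(ν_i⁻¹) y_i` with `y` constant along each orbit and with
`y_{i_a} ∈ X^{𝔤_a}`.  A right action is encoded as `ρ : G → X → X` with
`ρ 1 = id` and `ρ(ab) = ρ(b) ∘ ρ(a)`, as in the paper.
-/
theorem stmt9 {G I X : Type*} [Group G] [Fintype I] [DecidableEq I]
    (ρ : G → X → X) (hρ1 : ρ 1 = id)
    (hρmul : ∀ a b : G, ρ (a * b) = ρ b ∘ ρ a)
    (σ : Equiv.Perm I) (g : I → G) (rep : I → I) (m : I → ℕ)
    (hrep : ∀ i, rep (σ i) = rep i)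
    (hm : ∀ i, (σ ^ m i) (rep i) = i)
    (hmlt : ∀ i, m i < Function.minimalPeriod (⇑σ) (rep i)) :
    {x : I → X | ∀ i, ρ (g (σ i)) (x (σ i)) = x i}
      = {x : I → X | ∃ y : I → X,
          (∀ i, y i = y (rep i)) ∧
          (∀ i, rep i = i →
            ρ (cycProd σ g i (Function.minimalPeriod (⇑σ) i)) (y i) = y i) ∧
          ∀ i, x i = ρ (nuFun σ g rep m i)⁻¹ (y i)} := by
  have key : ∀ (a b : G) (z : X), ρ b (ρ a z) = ρ (a * b) z := fun a b z => by
    rw [hρmul]; rfl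
  have hid : ∀ z : X, ρ 1 z = z := fun z => by rw [hρ1]; rfl
  have hrep_pow : ∀ (k : ℕ) (j : I), rep ((σ ^ k) j) = rep j := by
    intro k
    induction k with
    | zero => intro j; simp
    | succ k ih =>
      intro j
      rw [pow_succ, Equiv.Perm.mul_apply, ih, hrep]
  have hreprep : ∀ i, rep (rep i) = rep i := fun i => by
    have h := hrep_pow (m i) (rep i)
    rw [hm i] at h
    exact h.symm
  have hmrep : ∀ i, m (rep i) = 0 := by
    intro i
    have h1 : (σ ^ m (rep i)) (rep (rep i)) = rep i := hm (rep i)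
    rw [hreprep i] at h1
    have hp : Function.IsPeriodicPt (⇑σ) (m (rep i)) (rep i) := by
      show (⇑σ)^[m (rep i)] (rep i) = rep i
      rw [← Equiv.Perm.coe_pow]
      exact h1
    have hlt := hmlt (rep i)
    rw [hreprep i] at hlt
    exact Nat.eq_zero_of_dvd_of_lt hp.minimalPeriod_dvd hlt
  have hperiod : ∀ j : I, (σ ^ Function.minimalPeriod (⇑σ) j) j = j := fun j => by
    have h := Function.iterate_minimalPeriod (f := ⇑σ) (x := j)
    rwa [← Equiv.Perm.coe_pow] at h
  have hνr : ∀ i, nuFun σ g rep m (rep i) = g (rep i) := fun i => by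
    unfold nuFun
    rw [hreprep, hmrep, cycProd_one]
  have hF : ∀ (x : I → X), (∀ i, ρ (g (σ i)) (x (σ i)) = x i) → ∀ (r : I) (n : ℕ),
      ρ (cycProd σ g r (n + 1)) (x ((σ ^ n) r)) = ρ (g r) (x r) := by
    intro x hx r n
    induction n with
    | zero => rw [cycProd_one]; simp
    | succ n ih =>
      rw [cycProd_succ, ← key]
      have h1 : (σ ^ (n + 1) : Equiv.Perm I) r = σ ((σ ^ n) r) := by
        rw [pow_succ', Equiv.Perm.mul_apply]
      rw [h1, hx ((σ ^ n) r), ih]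
  ext x
  simp only [Set.mem_setOf_eq]
  constructor
  · intro hx
    refine ⟨fun i => ρ (nuFun σ g rep m i) (x i), ?_, ?_, ?_⟩
    · intro i
      show ρ (nuFun σ g rep m i) (x i) = ρ (nuFun σ g rep m (rep i)) (x (rep i))
      rw [hνr]
      have h4 := hF x hx (rep i) (m i)
      rw [hm i] at h4
      exact h4
    · intro i hrepi
      have h0 : m i = 0 := by have := hmrep i; rwa [hrepi] at this
      have h2 : nuFun σ g rep m i = g i := by
        unfold nuFun; rw [hrepi, h0, cycProd_one]
      show ρ (cycProd σ g i (Function.minimalPeriod (⇑σ) i))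
          (ρ (nuFun σ g rep m i) (x i)) = ρ (nuFun σ g rep m i) (x i)
      rw [h2, key]
      have h3 := hF x hx i (Function.minimalPeriod (⇑σ) i)
      rw [cycProd_succ, hperiod i] at h3
      exact h3
    · intro i
      show x i = ρ (nuFun σ g rep m i)⁻¹ (ρ (nuFun σ g rep m i) (x i))
      rw [key, mul_inv_cancel, hid]
  · rintro ⟨y, hy1, hy2, hy3⟩ i
    have hσi_rep : rep (σ i) = rep i := hrep i
    have hyσi : y (σ i) = y (rep i) := by rw [hy1 (σ i), hσi_rep]
    have hσpow : (σ ^ (m i + 1)) (rep i) = σ i := by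
      rw [pow_succ', Equiv.Perm.mul_apply, hm i]
    by_cases hcase : m i + 1 < Function.minimalPeriod (⇑σ) (rep i)
    · have e1 : (⇑σ)^[m (σ i)] (rep i) = (⇑σ)^[m i + 1] (rep i) := by
        rw [← Equiv.Perm.coe_pow, ← Equiv.Perm.coe_pow, hσpow]
        have h := hm (σ i)
        rwa [hσi_rep] at h
      have hm1 : m (σ i) ∈ Set.Iio (Function.minimalPeriod (⇑σ) (rep i)) := by
        have := hmlt (σ i); rwa [hσi_rep] at this
      have hmeq : m (σ i) = m i + 1 :=
        Function.iterate_injOn_Iio_minimalPeriod hm1 hcase e1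
      have hνσ : nuFun σ g rep m (σ i) = g (σ i) * nuFun σ g rep m i := by
        show cycProd σ g (rep (σ i)) (m (σ i) + 1) = g (σ i) * cycProd σ g (rep i) (m i + 1)
        rw [hσi_rep, hmeq, cycProd_succ, hσpow]
      rw [hy3 (σ i), hy3 i, hνσ, hyσi, hy1 i, key]
      congr 1
      group
    · have hNeq : m i + 1 = Function.minimalPeriod (⇑σ) (rep i) := by
        have := hmlt i; omega
      have hσir : σ i = rep i := by
        rw [← hσpow, hNeq]
        exact hperiod (rep i)
      rw [hσir, hy3 (rep i), hνr, hy3 i, key, inv_mul_cancel, hid]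
      have hfix := hy2 (rep i) (hreprep i)
      have hν : nuFun σ g rep m i
          = cycProd σ g (rep i) (Function.minimalPeriod (⇑σ) (rep i)) := by
        show cycProd σ g (rep i) (m i + 1) = _
        rw [hNeq]
      rw [hν, hy1 i]
      conv_rhs => rw [← hfix]
      rw [key, mul_inv_cancel, hid]
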